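/- arXiv:1602.04671 — 9 statements merged into one kernel-verified Lean document; each statement's English description precedes it below -/
import Mathlib

section
/- Let S be a finite type, π : S → ℝ with ∑_{β∈S} π(β) = 1, and θ, θ' ∈ ℝ. Let P and P' be the equal input matrices with parameters (π, θ) and (π, θ') respectively. Then the matrix product P * P' equals the equal input matrix with parameters (π, θ''), where θ'' = 1 − (1 − θ)(1 − θ'); in particular (P * P') α β = π(β)·(1 − (1 − θ)(1 − θ')) for all α ≠ β, and consequently P * P' = P' * P (EI matrices with a common π commute). -/
noncomputable def EIMatrix {S : Type*} [Fintype S] [DecidableEq S]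
    (π : S → ℝ) (θ : ℝ) : Matrix S S ℝ :=
  fun α β => if α = β then 1 - θ + π α * θ else π β * θ

lemma ei_key {S : Type*} [Fintype S] [DecidableEq S]
    (π : S → ℝ) (hπ : ∑ β, π β = 1) (θ θ' : ℝ) :
    EIMatrix π θ * EIMatrix π θ' = EIMatrix π (1 - (1 - θ) * (1 - θ')) := by
  set M : Matrix S S ℝ := Matrix.of fun _ β => π β with hM
  have hE : ∀ t : ℝ, EIMatrix π t = t • M + (1 - t) • (1 : Matrix S S ℝ) := by
    intro t
    funext α β
    simp only [EIMatrix, Matrix.add_apply, Matrix.smul_apply, Matrix.one_apply, hM,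
      Matrix.of_apply, smul_eq_mul]
    split <;> rename_i h
    · subst h; simp; ring
    · simp [h]; ring
  have hPP : M * M = M := by
    funext α β
    simp [Matrix.mul_apply, hM, ← Finset.sum_mul, hπ]
  rw [hE, hE, hE]
  simp only [mul_add, add_mul, smul_mul_assoc, mul_smul_comm, hPP, mul_one, one_mul,
    smul_smul]
  module

/-- equal input matrices with a common stationary distribution are
multiplicatively closed (with `θ'' = 1 - (1-θ)(1-θ')`) and commute. -/
theorem ei_mul {S : Type*} [Fintype S] [DecidableEq S]
    (π : S → ℝ) (hπ : ∑ β, π β = 1) (θ θ' : ℝ) :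
    EIMatrix π θ * EIMatrix π θ' = EIMatrix π (1 - (1 - θ) * (1 - θ')) ∧
      (∀ α β, α ≠ β →
        (EIMatrix π θ * EIMatrix π θ') α β = π β * (1 - (1 - θ) * (1 - θ'))) ∧
      EIMatrix π θ * EIMatrix π θ' = EIMatrix π θ' * EIMatrix π θ := by
  refine ⟨ei_key π hπ θ θ', fun α β h => ?_, ?_⟩
  · rw [ei_key π hπ θ θ']; simp [EIMatrix, h]
  · rw [ei_key π hπ θ θ', ei_key π hπ θ' θ]; ring_nf
end

section
/- Let S be a finite type and π : S → ℝ with ∑_{β∈S} π(β) = 1. Let Q : Matrix S S ℝ be the equal input rate matrix, defined by Q α β = π(β) for α ≠ β and Q α α = π(α) − 1. Then for every t ∈ ℝ, the matrix exponential satisfies Matrix.exp ℝ (t • Q) = the equal input transition matrix with parameters (π, 1 − e^{−t}); explicitly, (Matrix.exp ℝ (t • Q)) α β = π(β)·(1 − e^{−t}) for α ≠ β, and (Matrix.exp ℝ (t • Q)) α α = e^{−t} + π(α)·(1 − e^{−t}). -/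
open NormedSpace

/-- The equal input rate matrix `Q` with `Q α β = π β` off the diagonal and
`Q α α = π α - 1` on the diagonal. -/
noncomputable def EIRateMatrix {S : Type*} [Fintype S] [DecidableEq S]
    (π : S → ℝ) : Matrix S S ℝ :=
  fun α β => if α = β then π α - 1 else π β

/-- Auxiliary scalar series fact. -/
lemma aux_scalar_tsum (c : ℝ) :
    ∑' n : ℕ, ((((n + 1).factorial : ℝ))⁻¹ • (-c) ^ (n + 1)) = Real.exp (-c) - 1 := by
  have hs : Summable fun n : ℕ => (((n.factorial : ℕ) : ℝ)⁻¹ • (-c) ^ n) :=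
    expSeries_summable' (𝕂 := ℝ) (-c)
  have h0 := Summable.tsum_eq_zero_add hs
  have he : Real.exp (-c) = ∑' n : ℕ, (((n.factorial : ℕ) : ℝ)⁻¹ • (-c) ^ n) := by
    rw [Real.exp_eq_exp_ℝ, exp_eq_tsum (𝕂 := ℝ)]
  simp only [Nat.factorial_zero, Nat.cast_one, inv_one, pow_zero, one_smul] at h0
  rw [← he] at h0
  linarith [h0]

/-- If `Q * Q = -Q` then `exp ℝ (c • Q) = 1 + (1 - e^{-c}) • Q`. -/
lemma exp_of_sq_eq_neg {S : Type*} [Fintype S] [DecidableEq S] (c : ℝ)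
    (Q : Matrix S S ℝ) (h : Q * Q = -Q) :
    exp (c • Q) = 1 + (1 - Real.exp (-c)) • Q := by
  letI : SeminormedRing (Matrix S S ℝ) := Matrix.linftyOpSemiNormedRing
  letI : NormedRing (Matrix S S ℝ) := Matrix.linftyOpNormedRing
  letI : NormedAlgebra ℝ (Matrix S S ℝ) := Matrix.linftyOpNormedAlgebra
  have hpow : ∀ n : ℕ, Q ^ (n + 1) = ((-1 : ℝ) ^ n) • Q := by
    intro n
    induction n with
    | zero => simp
    | succ n ih =>
      rw [pow_succ, ih, Matrix.smul_mul, h, pow_succ, mul_smul]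
      simp
  have hs : Summable fun n : ℕ => (((n.factorial : ℕ) : ℝ)⁻¹ • (c • Q) ^ n) :=
    expSeries_summable' (𝕂 := ℝ) (c • Q)
  rw [exp_eq_tsum (𝕂 := ℝ)]
  beta_reduce
  rw [Summable.tsum_eq_zero_add hs]
  have hterm : ∀ n : ℕ,
      ((((n + 1).factorial : ℝ))⁻¹ • (c • Q) ^ (n + 1)) =
        (-((((n + 1).factorial : ℝ))⁻¹ * (-c) ^ (n + 1))) • Q := by
    intro n
    rw [smul_pow, hpow, smul_smul, smul_smul]
    congr 1
    rw [neg_pow, pow_succ]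
    ring
  have hsum2 : Summable fun n : ℕ => (-((((n + 1).factorial : ℝ))⁻¹ * (-c) ^ (n + 1))) := by
    have := (expSeries_summable' (𝕂 := ℝ) (-c)).comp_injective Nat.succ_injective
    simpa [Function.comp, smul_eq_mul] using this.neg
  calc (((Nat.factorial 0 : ℕ) : ℝ)⁻¹ • (c • Q) ^ 0) + ∑' n : ℕ, ((((n + 1).factorial : ℝ))⁻¹ • (c • Q) ^ (n + 1))
      = 1 + ∑' n : ℕ, (-((((n + 1).factorial : ℝ))⁻¹ * (-c) ^ (n + 1))) • Q := by
        simp only [hterm]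
        simp
    _ = 1 + (∑' n : ℕ, -((((n + 1).factorial : ℝ))⁻¹ * (-c) ^ (n + 1))) • Q := by
        rw [Summable.tsum_smul_const hsum2]
    _ = 1 + (1 - Real.exp (-c)) • Q := by
        rw [tsum_neg]
        have := aux_scalar_tsum c
        simp only [smul_eq_mul] at this
        rw [this]
        ring_nf

/-- the matrix exponential of `t • Q` is the equal input transition
matrix with parameters `(π, 1 - e^{-t})`. -/
theorem ei_exp_rate_matrix {S : Type*} [Fintype S] [DecidableEq S]
    (π : S → ℝ) (hπ : ∑ β, π β = 1) (t : ℝ) :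
    (∀ α β, α ≠ β →
      exp (t • EIRateMatrix π) α β = π β * (1 - Real.exp (-t))) ∧
    (∀ α, exp (t • EIRateMatrix π) α α =
      Real.exp (-t) + π α * (1 - Real.exp (-t))) := by
  have hQ : EIRateMatrix π = Matrix.of (fun _ β => π β) - 1 := by
    ext α β
    by_cases hab : α = β <;> simp [EIRateMatrix, Matrix.one_apply, hab]
  have hPi : Matrix.of (fun (_ : S) β => π β) * Matrix.of (fun _ β => π β) =
      Matrix.of (fun _ β => π β) := by
    ext α β
    simp [Matrix.mul_apply, ← Finset.sum_mul, hπ]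
  have hQQ : EIRateMatrix π * EIRateMatrix π = -EIRateMatrix π := by
    rw [hQ, sub_mul, mul_sub, one_mul, mul_one, hPi]
    abel
  have key := exp_of_sq_eq_neg t (EIRateMatrix π) hQQ
  constructor
  · intro α β hab
    rw [key]
    simp [EIRateMatrix, Matrix.one_apply, hab, mul_comm]
  · intro α
    rw [key]
    simp [EIRateMatrix, Matrix.one_apply]
    ring
end

section
/- Let S and S' be finite types, let f : S → S' be any (lumping) map, let π : S → ℝ with ∑_{β∈S} π(β) = 1, let θ ∈ ℝ, and let P be the equal input matrix with parameters (π, θ). Define π̃ : S' → ℝ by π̃(b) = ∑_{β : f β = b} π(β). Then for every α ∈ S and b ∈ S': if f(α) ≠ b then ∑_{β : f β = b} P α β = π̃(b)·θ, and if f(α) = b then ∑_{β : f β = b} P α β = 1 − θ + π̃(b)·θ. In particular ∑_{β : f β = b} P α β depends on α only through f(α) (the lumpability criterion), and the lumped matrix P̃ : Matrix S' S' ℝ defined by P̃ (f α) b = ∑_{β : f β = b} P α β is the equal input matrix with parameters (π̃, θ). -/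
/-- lumping an equal input chain along any map `f : S → S'` again
gives an equal input chain, with lumped distribution `π̃ b = ∑_{f β = b} π β`. -/
theorem ei_lumpable {S S' : Type*} [Fintype S] [DecidableEq S]
    [Fintype S'] [DecidableEq S'] (f : S → S')
    (π : S → ℝ) (hπ : ∑ β, π β = 1) (θ : ℝ) :
    ∀ α b,
      ((f α ≠ b → ∑ β ∈ Finset.univ.filter (fun β => f β = b), EIMatrix π θ α β =
          (∑ β ∈ Finset.univ.filter (fun β => f β = b), π β) * θ) ∧
       (f α = b → ∑ β ∈ Finset.univ.filter (fun β => f β = b), EIMatrix π θ α β =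
          1 - θ + (∑ β ∈ Finset.univ.filter (fun β => f β = b), π β) * θ)) ∧
      ∑ β ∈ Finset.univ.filter (fun β => f β = b), EIMatrix π θ α β =
        EIMatrix (fun b => ∑ β ∈ Finset.univ.filter (fun β => f β = b), π β) θ (f α) b := by
  intro α b
  have hne : f α ≠ b → ∑ β ∈ Finset.univ.filter (fun β => f β = b), EIMatrix π θ α β =
      (∑ β ∈ Finset.univ.filter (fun β => f β = b), π β) * θ := by
    intro h
    rw [Finset.sum_mul]
    apply Finset.sum_congr rfl
    intro β hβ
    simp only [Finset.mem_filter] at hβ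
    have : α ≠ β := fun e => h (e ▸ hβ.2)
    simp [EIMatrix, this]
  have heq : f α = b → ∑ β ∈ Finset.univ.filter (fun β => f β = b), EIMatrix π θ α β =
      1 - θ + (∑ β ∈ Finset.univ.filter (fun β => f β = b), π β) * θ := by
    intro h
    have hmem : α ∈ Finset.univ.filter (fun β => f β = b) := by simp [h]
    rw [← Finset.add_sum_erase _ _ hmem, ← Finset.add_sum_erase _ _ hmem,
        add_mul, Finset.sum_mul]
    have h1 : EIMatrix π θ α α = 1 - θ + π α * θ := by simp [EIMatrix]
    have h2 : ∀ β ∈ (Finset.univ.filter (fun β => f β = b)).erase α,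
        EIMatrix π θ α β = π β * θ := by
      intro β hβ
      have : α ≠ β := fun e => (Finset.mem_erase.mp hβ).1 e.symm
      simp [EIMatrix, this]
    rw [h1, Finset.sum_congr rfl h2]
    ring
  refine ⟨⟨hne, heq⟩, ?_⟩
  by_cases h : f α = b
  · rw [heq h]; simp [EIMatrix, h]
  · rw [hne h]; simp [EIMatrix, h]
end

section
/- (Lake-type invariants.) Let S be a finite type and let a₁, a₂, b₁, b₂ ∈ S be pairwise distinct. Let π : S → ℝ satisfy π(a₁) ≠ 0, π(a₂) ≠ 0, π(b₁) ≠ 0, π(b₂) ≠ 0, let w, p₁, p₂, q₁, q₂ : S → ℝ be arbitrary functions, and let c, d ∈ ℝ. Suppose the partial separability condition holds: for i = 1, 2 and every s ∈ S with s ≠ a₁ and s ≠ a₂, pᵢ(s) = π(aᵢ)·c; and for j = 1, 2 and every s ∈ S with s ≠ b₁ and s ≠ b₂, qⱼ(s) = π(bⱼ)·d. Define P_{ij} = ∑_{s∈S} w(s)·pᵢ(s)·qⱼ(s) and the normalized quantities P̃_{ij} = P_{ij} / (π(aᵢ)·π(bⱼ)). Then P̃₁₁ + P̃₂₂ − P̃₁₂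 − P̃₂₁ = 0. -/
/-- Lake-type invariants: under the partial separability condition,
the normalized quantities satisfy `P̃₁₁ + P̃₂₂ - P̃₁₂ - P̃₂₁ = 0`. -/
theorem lake_type_invariant {S : Type*} [Fintype S]
    (a₁ a₂ b₁ b₂ : S)
    (hab : a₁ ≠ a₂ ∧ a₁ ≠ b₁ ∧ a₁ ≠ b₂ ∧ a₂ ≠ b₁ ∧ a₂ ≠ b₂ ∧ b₁ ≠ b₂)
    (π : S → ℝ)
    (ha₁ : π a₁ ≠ 0) (ha₂ : π a₂ ≠ 0) (hb₁ : π b₁ ≠ 0) (hb₂ : π b₂ ≠ 0)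
    (w p₁ p₂ q₁ q₂ : S → ℝ) (c d : ℝ)
    (hp₁ : ∀ s, s ≠ a₁ → s ≠ a₂ → p₁ s = π a₁ * c)
    (hp₂ : ∀ s, s ≠ a₁ → s ≠ a₂ → p₂ s = π a₂ * c)
    (hq₁ : ∀ s, s ≠ b₁ → s ≠ b₂ → q₁ s = π b₁ * d)
    (hq₂ : ∀ s, s ≠ b₁ → s ≠ b₂ → q₂ s = π b₂ * d) :
    (∑ s, w s * p₁ s * q₁ s) / (π a₁ * π b₁) +
      (∑ s, w s * p₂ s * q₂ s) / (π a₂ * π b₂) -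
      (∑ s, w s * p₁ s * q₂ s) / (π a₁ * π b₂) -
      (∑ s, w s * p₂ s * q₁ s) / (π a₂ * π b₁) = 0 := by
  obtain ⟨h12, hb11, hb12, hb21, hb22, hbb⟩ := hab
  simp only [Finset.sum_div, ← Finset.sum_add_distrib, ← Finset.sum_sub_distrib]
  apply Finset.sum_eq_zero
  intro s _
  by_cases h : s ≠ a₁ ∧ s ≠ a₂
  · rw [hp₁ s h.1 h.2, hp₂ s h.1 h.2]
    field_simp
    ring
  · have hs : s = a₁ ∨ s = a₂ := by tauto
    have h1 : s ≠ b₁ := by rcases hs with h | h <;> simp [h, hb11, hb21]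
    have h2 : s ≠ b₂ := by rcases hs with h | h <;> simp [h, hb12, hb22]
    rw [hq₁ s h1 h2, hq₂ s h1 h2]
    field_simp
    ring
end

section
/- Let n ≥ 1, let S be a finite type with |S| = κ, and let π : S → ℝ satisfy π(s) > 0 for all s and ∑_{s∈S} π(s) = 1. For each set partition σ of Fin n (a Finpartition of Finset.univ in Fin n), let q_σ : (Fin n → S) → ℝ be the point defined by: q_σ(χ) = ∏_{B ∈ σ.parts} π(s_B) if χ is constant on every block B of σ (where s_B denotes the common value of χ on B), and q_σ(χ) = 0 otherwise. Then the family of points (q_σ), indexed by the set partitions σ of Fin n having at most κ blocks, is affinely independent in the real vector space (Fin n → S) → ℝ (i.e., AffineIndependent ℝ for this indexed family). -/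
/-- The point `q_σ` of the equal input / random cluster model associated with a
set partition `σ` of `Fin n`: its coordinate at a character `χ : Fin n → S` is
`∏_{B ∈ σ} π(s_B)` if `χ` is constant with value `s_B` on each block `B` of `σ`,
and `0` otherwise. -/
noncomputable def qpt {n : ℕ} {S : Type*} [Fintype S] [DecidableEq S] (π : S → ℝ)
    (σ : Finpartition (Finset.univ : Finset (Fin n))) (χ : Fin n → S) : ℝ :=
  if ∀ B ∈ σ.parts, ∀ i ∈ B, ∀ j ∈ B, χ i = χ j then
    ∏ B ∈ σ.parts.attach,
      π (χ ((B : Finset (Fin n)).min' (σ.nonempty_of_mem_parts B.2)))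
  else 0

/-- for a strictly positive distribution `π` on `κ` states, the
points `q_σ`, indexed by the set partitions `σ` of `Fin n` with at most `κ`
blocks, are affinely independent. -/
theorem qpt_affineIndependent (n : ℕ) (hn : 1 ≤ n) {S : Type*} [Fintype S]
    [DecidableEq S] (κ : ℕ) (hκ : Fintype.card S = κ)
    (π : S → ℝ) (hpos : ∀ s, 0 < π s) (hsum : ∑ s, π s = 1) :
    AffineIndependent ℝ
      (fun σ : {σ : Finpartition (Finset.univ : Finset (Fin n)) //
          σ.parts.card ≤ κ} => qpt π σ.1) := by
  subst hκ
  rw [affineIndependent_iff]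
  intro s w _hw0 hcomb
  have heval : ∀ χ : Fin n → S, ∑ τ ∈ s, w τ * qpt π τ.1 χ = 0 := by
    intro χ
    have h := congrFun hcomb χ
    simpa [Finset.sum_apply, Pi.smul_apply, smul_eq_mul] using h
  suffices key : ∀ σ : Finpartition (Finset.univ : Finset (Fin n)),
      ∀ hσ : σ.parts.card ≤ Fintype.card S,
      (⟨σ, hσ⟩ : {σ : Finpartition (Finset.univ : Finset (Fin n)) //
          σ.parts.card ≤ Fintype.card S}) ∈ s → w ⟨σ, hσ⟩ = 0 by
    rintro ⟨σ, hσ⟩ he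
    exact key σ hσ he
  intro σ
  induction σ using WellFoundedLT.induction with
  | _ σ IH =>
  intro hσ he
  -- choose an injection from the parts of σ into S
  obtain ⟨f⟩ : Nonempty (↥σ.parts ↪ S) :=
    Function.Embedding.nonempty_of_card_le (by simpa [Fintype.card_coe] using hσ)
  set χ : Fin n → S := fun i => f ⟨σ.part i, σ.part_mem.mpr (Finset.mem_univ i)⟩ with hχ
  -- χ is constant on each block of σ
  have hcond : ∀ B ∈ σ.parts, ∀ i ∈ B, ∀ j ∈ B, χ i = χ j := by
    intro B hB i hi j hj
    simp only [hχ]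
    congr 2
    rw [σ.part_eq_of_mem hB hi, σ.part_eq_of_mem hB hj]
  have hqσ : 0 < qpt π σ χ := by
    rw [qpt, if_pos hcond]
    exact Finset.prod_pos fun B _ => hpos _
  -- any partition with nonzero coordinate at χ refines σ
  have hle : ∀ τ : Finpartition (Finset.univ : Finset (Fin n)),
      qpt π τ χ ≠ 0 → τ ≤ σ := by
    intro τ hτ
    have h : ∀ B ∈ τ.parts, ∀ i ∈ B, ∀ j ∈ B, χ i = χ j := by
      by_contra h'
      rw [qpt, if_neg h'] at hτ
      exact hτ rfl
    intro B hB
    obtain ⟨x, hx⟩ := τ.nonempty_of_mem_parts hB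
    refine ⟨σ.part x, σ.part_mem.mpr (Finset.mem_univ x), fun y hy => ?_⟩
    have hxy : χ y = χ x := h B hB y hy x hx
    have hpart : σ.part y = σ.part x := by
      have := f.injective hxy
      exact congrArg Subtype.val this
    exact hpart ▸ σ.mem_part (Finset.mem_univ y)
  -- evaluate the linear relation at χ : only the σ-term survives
  have hsingle : ∑ τ ∈ s, w τ * qpt π τ.1 χ = w ⟨σ, hσ⟩ * qpt π σ χ := by
    refine Finset.sum_eq_single_of_mem _ he ?_
    rintro ⟨τ, hτκ⟩ hτs hne
    by_cases hz : qpt π τ χ = 0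
    · rw [hz, mul_zero]
    · have hτle : τ ≤ σ := hle τ hz
      have hτne : τ ≠ σ := fun h => hne (Subtype.ext h)
      have : w ⟨τ, hτκ⟩ = 0 := IH τ (lt_of_le_of_ne hτle hτne) hτκ hτs
      rw [this, zero_mul]
  have : w ⟨σ, hσ⟩ * qpt π σ χ = 0 := by rw [← hsingle]; exact heval χ
  exact (mul_eq_zero.mp this).resolve_right hqσ.ne'
end

section
/- Let n ≥ 1, let S be a finite type with |S| = κ ≥ 1, and let π : S → ℝ be the uniform distribution, π(s) = 1/κ for all s. For each set partition σ of Fin n, let q_σ : (Fin n → S) → ℝ be defined by q_σ(χ) = ∏_{B ∈ σ.parts} π(s_B) if χ is constant on every block B of σ (with common value s_B), and 0 otherwise. Then the ℝ-linear span of { q_σ : σ a set partition of Fin n with at most κ blocks } equals the subspace { v : (Fin n → S) → ℝ | v(χ) = v(χ') whenever χ and χ' have the same kernel partition, i.e. whenever (χ i = χ j ↔ χ' i = χ' j) for all i, j }. In particular this span has dimension equal to the number of set partitions of Fin n with at most κ blocks. -/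
open Finset

section Aux

variable {n : ℕ} {S : Type*} [Fintype S] [DecidableEq S]

/-- Kernel partition of a character. -/
def kerP (χ : Fin n → S) : Finpartition (Finset.univ : Finset (Fin n)) :=
  @Finpartition.ofSetoid (Fin n) _ _ (Setoid.ker χ)
    (fun a b => decidable_of_iff (χ a = χ b) Iff.rfl)

lemma mem_part_kerP {χ : Fin n → S} {a b : Fin n} :
    b ∈ (kerP χ).part a ↔ χ a = χ b :=
  @Finpartition.mem_part_ofSetoid_iff_rel (Fin n) _ a _ (Setoid.ker χ)
    (fun a b => decidable_of_iff (χ a = χ b) Iff.rfl) b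

lemma part_kerP (χ : Fin n → S) (a : Fin n) :
    (kerP χ).part a = Finset.univ.filter (fun b => χ a = χ b) := by
  ext b; simp [mem_part_kerP]

lemma finpartition_eq_of_part_eq {P Q : Finpartition (Finset.univ : Finset (Fin n))}
    (h : ∀ a, P.part a = Q.part a) : P = Q := by
  have key : ∀ (P Q : Finpartition (Finset.univ : Finset (Fin n))),
      (∀ a, P.part a = Q.part a) → ∀ t ∈ P.parts, t ∈ Q.parts := by
    intro P Q h t ht
    obtain ⟨a, ha⟩ := P.nonempty_of_mem_parts ht
    have : t = P.part a := (P.part_eq_of_mem ht ha).symm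
    rw [this, h a]
    exact Q.part_mem.mpr (mem_univ a)
  ext t
  exact ⟨key P Q h t, key Q P (fun a => (h a).symm) t⟩

lemma kerP_eq_iff {χ χ' : Fin n → S} :
    kerP χ = kerP χ' ↔ ∀ i j, χ i = χ j ↔ χ' i = χ' j := by
  constructor
  · intro h i j
    rw [show (χ i = χ j) ↔ j ∈ (kerP χ).part i from mem_part_kerP.symm, h, mem_part_kerP]
  · intro h
    apply finpartition_eq_of_part_eq
    intro a
    rw [part_kerP, part_kerP]
    exact Finset.filter_congr (fun b _ => by simpa using h a b)

lemma card_parts_kerP_le (χ : Fin n → S) :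
    (kerP χ).parts.card ≤ Fintype.card S := by
  have hsub : (kerP χ).parts ⊆
      Finset.univ.image (fun s => Finset.univ.filter (fun b => χ b = s)) := by
    intro t ht
    obtain ⟨a, ha⟩ := (kerP χ).nonempty_of_mem_parts ht
    have : t = (kerP χ).part a := ((kerP χ).part_eq_of_mem ht ha).symm
    rw [mem_image]
    exact ⟨χ a, mem_univ _, by rw [this, part_kerP]; ext b; simp [eq_comm]⟩
  calc (kerP χ).parts.card ≤ _ := Finset.card_le_card hsub
    _ ≤ (Finset.univ : Finset S).card := Finset.card_image_le
    _ = Fintype.card S := Finset.card_univ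

lemma exists_kerP_eq {σ : Finpartition (Finset.univ : Finset (Fin n))}
    (h : σ.parts.card ≤ Fintype.card S) : ∃ χ : Fin n → S, kerP χ = σ := by
  have hcard : Fintype.card {B // B ∈ σ.parts} ≤ Fintype.card S := by
    rwa [Fintype.card_coe]
  obtain ⟨f⟩ := Function.Embedding.nonempty_of_card_le hcard
  refine ⟨fun i => f ⟨σ.part i, σ.part_mem.mpr (mem_univ i)⟩, ?_⟩
  apply finpartition_eq_of_part_eq
  intro a
  rw [part_kerP]
  ext b
  simp only [mem_filter, mem_univ, true_and]
  rw [show (f ⟨σ.part a, _⟩ = f ⟨σ.part b, _⟩) ↔ σ.part a = σ.part b from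
    ⟨fun hh => by simpa [Subtype.ext_iff] using f.injective hh, fun hh => by simp [Subtype.ext_iff, hh]⟩]
  rw [eq_comm, ← σ.mem_part_iff_part_eq_part (mem_univ b) (mem_univ a)]

lemma refines_iff {σ : Finpartition (Finset.univ : Finset (Fin n))} {χ : Fin n → S} :
    (∀ B ∈ σ.parts, ∀ i ∈ B, ∀ j ∈ B, χ i = χ j) ↔ σ ≤ kerP χ := by
  constructor
  · intro h B hB
    obtain ⟨i₀, hi₀⟩ := σ.nonempty_of_mem_parts hB
    refine ⟨(kerP χ).part i₀, (kerP χ).part_mem.mpr (mem_univ i₀), fun j hj => ?_⟩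
    exact mem_part_kerP.mpr (h B hB i₀ hi₀ j hj)
  · intro h B hB i hi j hj
    obtain ⟨C, hC, hBC⟩ := h hB
    have hiC := hBC hi
    have : C = (kerP χ).part i := ((kerP χ).part_eq_of_mem hC hiC).symm
    have := this ▸ hBC hj
    exact (mem_part_kerP.mp this)

end Aux
open Finset

section Aux2

open scoped Classical

variable {n : ℕ} {S : Type*} [Fintype S] [DecidableEq S]

/-- Indicator of the class of characters with kernel partition `τ`. -/
noncomputable def epart (τ : Finpartition (Finset.univ : Finset (Fin n))) :
    (Fin n → S) → ℝ :=
  fun χ => if kerP χ = τ then (1 : ℝ) else 0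

lemma qpt_eq {κ : ℕ} (π : S → ℝ) (hunif : ∀ s, π s = 1 / κ)
    (σ : Finpartition (Finset.univ : Finset (Fin n))) :
    qpt π σ = fun χ => ((1 : ℝ) / κ) ^ σ.parts.card *
      (if σ ≤ kerP χ then (1 : ℝ) else 0) := by
  funext χ
  rw [qpt]
  by_cases h : ∀ B ∈ σ.parts, ∀ i ∈ B, ∀ j ∈ B, χ i = χ j
  · rw [if_pos h, if_pos (refines_iff.mp h), mul_one]
    simp only [hunif]
    rw [Finset.prod_const, Finset.card_attach]
  · rw [if_neg h, if_neg (fun hle => h (refines_iff.mpr hle)), mul_zero]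

lemma sum_epart (σ : Finpartition (Finset.univ : Finset (Fin n))) (χ : Fin n → S) :
    ∑ τ ∈ Finset.univ.filter (fun τ' => σ ≤ τ'), epart τ χ =
      if σ ≤ kerP χ then (1 : ℝ) else 0 := by
  simp only [epart]
  rw [Finset.sum_ite_eq]
  simp

lemma epart_eq_zero {κ : ℕ} (hκ : Fintype.card S = κ)
    {τ : Finpartition (Finset.univ : Finset (Fin n))} (h : ¬ τ.parts.card ≤ κ) :
    (epart τ : (Fin n → S) → ℝ) = 0 := by
  funext χ
  refine if_neg fun hh => h ?_
  rw [← hh, ← hκ]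
  exact card_parts_kerP_le χ

lemma epart_mem_span {κ : ℕ} (hκ : Fintype.card S = κ) (hκ1 : 1 ≤ κ)
    (π : S → ℝ) (hunif : ∀ s, π s = 1 / κ)
    (τ : Finpartition (Finset.univ : Finset (Fin n))) :
    epart τ ∈ Submodule.span ℝ
      {v : (Fin n → S) → ℝ |
        ∃ σ : Finpartition (Finset.univ : Finset (Fin n)),
          σ.parts.card ≤ κ ∧ v = qpt π σ} := by
  have hκ0 : (κ : ℝ) ≠ 0 := Nat.cast_ne_zero.mpr (by omega)
  suffices H : ∀ k, ∀ τ : Finpartition (Finset.univ : Finset (Fin n)),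
      (Finset.univ.filter (fun τ' => τ < τ')).card = k →
      epart τ ∈ Submodule.span ℝ
        {v : (Fin n → S) → ℝ |
          ∃ σ : Finpartition (Finset.univ : Finset (Fin n)),
            σ.parts.card ≤ κ ∧ v = qpt π σ} from H _ τ rfl
  intro k
  induction k using Nat.strong_induction_on with
  | _ k IH =>
    intro τ hk
    by_cases hcard : τ.parts.card ≤ κ
    · have key : (epart τ : (Fin n → S) → ℝ) = (κ : ℝ) ^ τ.parts.card • qpt π τ -
          ∑ τ' ∈ Finset.univ.filter (fun τ' => τ < τ'), epart τ' := by
        funext χ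
        simp only [Pi.sub_apply, Pi.smul_apply, smul_eq_mul, Finset.sum_apply]
        rw [qpt_eq π hunif]
        have hsum : ∑ τ' ∈ Finset.univ.filter (fun τ' => τ < τ'), epart τ' χ =
            if τ < kerP χ then (1 : ℝ) else 0 := by
          simp only [epart]
          rw [Finset.sum_ite_eq]
          simp
        rw [hsum]
        have hpow : (κ : ℝ) ^ τ.parts.card * ((1 : ℝ) / κ) ^ τ.parts.card = 1 := by
          rw [← mul_pow]
          field_simp
          exact one_pow _
        simp only [epart]
        rcases eq_or_ne (kerP χ) τ with h | h
        · rw [if_pos h, if_pos (le_of_eq h.symm), if_neg (by rw [h]; exact lt_irrefl τ)]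
          rw [← mul_assoc, hpow]
          ring
        · rw [if_neg h]
          by_cases hle : τ ≤ kerP χ
          · rw [if_pos hle, if_pos (lt_of_le_of_ne hle (Ne.symm h)), ← mul_assoc, hpow]
            ring
          · rw [if_neg hle, if_neg (fun hlt => hle hlt.le)]
            ring
      rw [key]
      refine sub_mem (Submodule.smul_mem _ _ (Submodule.subset_span ⟨τ, hcard, rfl⟩))
        (Submodule.sum_mem _ ?_)
      intro τ' hτ'
      have hττ' : τ < τ' := by simpa using hτ'
      refine IH _ ?_ τ' rfl
      rw [← hk]
      apply Finset.card_lt_card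
      constructor
      · intro τ'' hτ''
        simp only [Finset.mem_filter, Finset.mem_univ, true_and] at hτ'' ⊢
        exact hττ'.trans hτ''
      · intro habs
        have := habs (by simpa using hττ')
        simp at this
    · rw [epart_eq_zero hκ hcard]
      exact zero_mem _

end Aux2
/-- for the uniform distribution, the span of the points `q_σ`
(over partitions with at most `κ` blocks) is exactly the subspace of vectors
constant on classes of characters with a common kernel partition; in particular
its dimension is the number of set partitions of `Fin n` with at most `κ`
blocks. -/
theorem qpt_span_uniform (n : ℕ) (hn : 1 ≤ n) {S : Type*} [Fintype S]
    [DecidableEq S] (κ : ℕ) (hκ : Fintype.card S = κ) (hκ1 : 1 ≤ κ)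
    (π : S → ℝ) (hunif : ∀ s, π s = 1 / κ) :
    (Submodule.span ℝ
        {v : (Fin n → S) → ℝ |
          ∃ σ : Finpartition (Finset.univ : Finset (Fin n)),
            σ.parts.card ≤ κ ∧ v = qpt π σ} : Set ((Fin n → S) → ℝ)) =
      {v : (Fin n → S) → ℝ | ∀ χ χ' : Fin n → S,
        (∀ i j, χ i = χ j ↔ χ' i = χ' j) → v χ = v χ'} ∧
    Module.finrank ℝ
        (Submodule.span ℝ
          {v : (Fin n → S) → ℝ |
            ∃ σ : Finpartition (Finset.univ : Finset (Fin n)),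
              σ.parts.card ≤ κ ∧ v = qpt π σ}) =
      Nat.card {σ : Finpartition (Finset.univ : Finset (Fin n)) //
        σ.parts.card ≤ κ} := by
  classical
  have hS : 0 < Fintype.card S := by omega
  haveI : Nonempty S := Fintype.card_pos_iff.mp hS
  haveI : Nonempty (Fin n → S) := ⟨fun _ => Classical.arbitrary S⟩
  set G : Set ((Fin n → S) → ℝ) :=
    {v : (Fin n → S) → ℝ |
      ∃ σ : Finpartition (Finset.univ : Finset (Fin n)),
        σ.parts.card ≤ κ ∧ v = qpt π σ} with hG
  -- the representative of each realizable partition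
  set pick : Finpartition (Finset.univ : Finset (Fin n)) → (Fin n → S) :=
    fun τ => if h : ∃ χ : Fin n → S, kerP χ = τ then h.choose else Classical.arbitrary _
    with hpickdef
  have hpick2 : ∀ τ, (∃ χ : Fin n → S, kerP χ = τ) → kerP (pick τ) = τ := by
    intro τ h
    rw [hpickdef]
    simp only [dif_pos h]
    exact h.choose_spec
  have hpick : ∀ χ : Fin n → S, kerP (pick (kerP χ)) = kerP χ := fun χ =>
    hpick2 _ ⟨χ, rfl⟩
  -- the symmetric subspace
  set W : Submodule ℝ ((Fin n → S) → ℝ) :=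
    { carrier := {v : (Fin n → S) → ℝ | ∀ χ χ' : Fin n → S,
        (∀ i j, χ i = χ j ↔ χ' i = χ' j) → v χ = v χ'}
      add_mem' := fun ha hb χ χ' h => by
        simp only [Pi.add_apply, ha χ χ' h, hb χ χ' h]
      zero_mem' := fun χ χ' _ => rfl
      smul_mem' := fun c v hv χ χ' h => by
        simp only [Pi.smul_apply, hv χ χ' h] } with hW
  -- decomposition of any symmetric vector
  have hdecomp : ∀ v ∈ W, v = ∑ τ : Finpartition (Finset.univ : Finset (Fin n)),
      v (pick τ) • epart τ := by
    intro v hv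
    funext χ
    rw [Finset.sum_apply]
    simp only [Pi.smul_apply, smul_eq_mul, epart, mul_ite, mul_one, mul_zero]
    rw [Finset.sum_ite_eq]
    simp only [Finset.mem_univ, if_true]
    exact (hv _ _ (kerP_eq_iff.mp (hpick χ))).symm
  have hspanW : Submodule.span ℝ G = W := by
    apply le_antisymm
    · rw [Submodule.span_le]
      rintro v ⟨σ, -, rfl⟩
      intro χ χ' h
      rw [qpt_eq π hunif]
      have : kerP χ = kerP χ' := kerP_eq_iff.mpr h
      simp only [this]
    · intro v hv
      rw [hdecomp v hv]
      exact Submodule.sum_mem _ fun τ _ =>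
        Submodule.smul_mem _ _ (epart_mem_span hκ hκ1 π hunif τ)
  constructor
  · rw [hspanW]
    rfl
  · -- the basis indexed by partitions with at most κ parts
    set b : {σ : Finpartition (Finset.univ : Finset (Fin n)) // σ.parts.card ≤ κ} →
        ((Fin n → S) → ℝ) := fun σ => epart σ.1 with hb
    have hreal : ∀ σ : {σ : Finpartition (Finset.univ : Finset (Fin n)) //
        σ.parts.card ≤ κ}, kerP (pick σ.1) = σ.1 := by
      intro σ
      exact hpick2 _ (exists_kerP_eq (by rw [hκ]; exact σ.2))
    have li : LinearIndependent ℝ b := by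
      rw [Fintype.linearIndependent_iff]
      intro c hc σ
      have := congrFun hc (pick σ.1)
      rw [Finset.sum_apply] at this
      simp only [Pi.zero_apply] at this
      rw [Finset.sum_eq_single σ] at this
      · simpa [hb, epart, hreal σ] using this
      · intro i _ hne
        simp only [hb, Pi.smul_apply, smul_eq_mul, epart, hreal σ]
        rw [if_neg (fun hh => hne (Subtype.ext hh.symm)), mul_zero]
      · intro habs
        exact absurd (Finset.mem_univ σ) habs
    have hepart_span : ∀ τ : Finpartition (Finset.univ : Finset (Fin n)),
        epart τ ∈ Submodule.span ℝ (Set.range b) := by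
      intro τ
      by_cases h : τ.parts.card ≤ κ
      · exact Submodule.subset_span ⟨⟨τ, h⟩, rfl⟩
      · rw [epart_eq_zero hκ h]
        exact zero_mem _
    have hsp : Submodule.span ℝ (Set.range b) = Submodule.span ℝ G := by
      apply le_antisymm
      · rw [Submodule.span_le]
        rintro v ⟨σ, rfl⟩
        exact epart_mem_span hκ hκ1 π hunif σ.1
      · rw [hspanW]
        intro v hv
        rw [hdecomp v hv]
        exact Submodule.sum_mem _ fun τ _ => Submodule.smul_mem _ _ (hepart_span τ)
    rw [← hsp]
    rw [Module.finrank_eq_card_basis (Module.Basis.span li), Nat.card_eq_fintype_card]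
end

section
/- Let n ≥ 1, S a finite type, and π : S → ℝ with π(s) > 0 for all s and ∑ π = 1. Call two characters χ, χ' : Fin n → S equivalent (χ ≡ χ') if (i) they have the same kernel partition, i.e. for all i, j: χ i = χ j ↔ χ' i = χ' j, and (ii) χ'(i) = χ(i) for every i belonging to a block of the kernel partition of size at least 2 (i.e., whenever there exists j ≠ i with χ j = χ i). If χ ≡ χ', then for every set partition σ of Fin n, the normalized coordinates agree: q_σ(χ) / ∏_{i} π(χ(i)) = q_σ(χ') / ∏_{i} π(χ'(i)). -/
/-- if two characters are equivalent (same kernel partition and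
agreeing on every block of size at least 2), then all of their normalized
coordinates agree. -/
theorem qpt_equiv_characters (n : ℕ) (hn : 1 ≤ n) {S : Type*} [Fintype S]
    [DecidableEq S] (π : S → ℝ) (hpos : ∀ s, 0 < π s) (hsum : ∑ s, π s = 1)
    (χ χ' : Fin n → S)
    (hker : ∀ i j, χ i = χ j ↔ χ' i = χ' j)
    (hagree : ∀ i, (∃ j, j ≠ i ∧ χ j = χ i) → χ' i = χ i) :
    ∀ σ : Finpartition (Finset.univ : Finset (Fin n)),
      qpt π σ χ / ∏ i, π (χ i) = qpt π σ χ' / ∏ i, π (χ' i) := by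
  intro σ
  have hProd : ∀ f : Fin n → S, ∏ i, π (f i) =
      ∏ B ∈ σ.parts.attach, ∏ i ∈ (B : Finset (Fin n)), π (f i) := by
    intro f
    have hu : (Finset.univ : Finset (Fin n)) = σ.parts.biUnion id := by
      rw [← Finset.sup_eq_biUnion, σ.sup_parts]
    have h2 : ∏ x ∈ σ.parts, ∏ i ∈ x, π (f i)
        = ∏ i ∈ σ.parts.biUnion id, π (f i) :=
      (Finset.prod_biUnion (fun x hx y hy hxy => σ.disjoint hx hy hxy)).symm
    rw [Finset.prod_attach σ.parts (fun B => ∏ i ∈ B, π (f i)), h2, ← hu]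
  by_cases h : ∀ B ∈ σ.parts, ∀ i ∈ B, ∀ j ∈ B, χ i = χ j
  · have h' : ∀ B ∈ σ.parts, ∀ i ∈ B, ∀ j ∈ B, χ' i = χ' j := fun B hB i hi j hj =>
      (hker i j).mp (h B hB i hi j hj)
    rw [qpt, if_pos h, qpt, if_pos h', hProd χ, hProd χ',
      ← Finset.prod_div_distrib, ← Finset.prod_div_distrib]
    refine Finset.prod_congr rfl ?_
    intro B _
    set m := (B : Finset (Fin n)).min' (σ.nonempty_of_mem_parts B.2) with hm_def
    have hm : m ∈ (B : Finset (Fin n)) := Finset.min'_mem _ _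
    have hconst : ∏ i ∈ (B : Finset (Fin n)), π (χ i) = π (χ m) ^ (B : Finset (Fin n)).card := by
      rw [Finset.prod_congr rfl fun i hi => by rw [h B.1 B.2 i hi m hm], Finset.prod_const]
    have hconst' : ∏ i ∈ (B : Finset (Fin n)), π (χ' i) = π (χ' m) ^ (B : Finset (Fin n)).card := by
      rw [Finset.prod_congr rfl fun i hi => by rw [h' B.1 B.2 i hi m hm], Finset.prod_const]
    rw [hconst, hconst']
    by_cases hc : ∃ j ∈ (B : Finset (Fin n)), j ≠ m
    · obtain ⟨j, hj, hjm⟩ := hc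
      rw [hagree m ⟨j, hjm, h B.1 B.2 j hj m hm⟩]
    · push_neg at hc
      have hB1 : (B : Finset (Fin n)) = {m} := by
        apply Finset.eq_singleton_iff_unique_mem.2 ⟨hm, hc⟩
      rw [hB1, Finset.card_singleton, pow_one, pow_one, div_self (hpos (χ m)).ne',
        div_self (hpos (χ' m)).ne']
  · have h' : ¬ ∀ B ∈ σ.parts, ∀ i ∈ B, ∀ j ∈ B, χ' i = χ' j := fun hc =>
      h fun B hB i hi j hj => (hker i j).mpr (hc B hB i hi j hj)
    rw [qpt, if_neg h, qpt, if_neg h', zero_div, zero_div]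
end

section
/- Let n ≥ 1, S a finite type, and π : S → ℝ with π(s) > 0 for all s, ∑ π = 1, and π injective (π(s) = π(t) implies s = t, i.e. π is not invariant under any nontrivial permutation of S). Let χ, χ' : Fin n → S be characters such that for every set partition σ of Fin n all of whose blocks are singletons except possibly one, q_σ(χ) / ∏_i π(χ(i)) = q_σ(χ') / ∏_i π(χ'(i)). Then χ ≡ χ': χ and χ' have the same kernel partition and χ'(i) = χ(i) for every i lying in a block of that kernel partition of size at least 2. -/
open Finset


variable {n : ℕ}

private def coll (i j k : Fin n) : Fin n := if k = j then i else k

private instance (i j : Fin n) : DecidableRel (Setoid.ker (coll i j)).r :=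
  fun a b => decidable_of_iff (coll i j a = coll i j b) Iff.rfl

private def pairPart (i j : Fin n) : Finpartition (Finset.univ : Finset (Fin n)) :=
  Finpartition.ofSetoid (Setoid.ker (coll i j))

private lemma mem_pairParts (i j : Fin n) (B : Finset (Fin n)) :
    B ∈ (pairPart i j).parts ↔
      ∃ a, B = univ.filter fun b => coll i j a = coll i j b := by
  simp only [pairPart, Finpartition.ofSetoid, Finpartition.ofSetSetoid, Setoid.ker, Function.onFun, mem_image, mem_univ,
    true_and]
  constructor <;> rintro ⟨a, h⟩ <;> subst h <;> refine ⟨a, ?_⟩ <;> ext b <;> simp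

private lemma fiber_pair (i j : Fin n) (hij : i ≠ j) (a : Fin n) (ha : a = i ∨ a = j) :
    (univ.filter fun b => coll i j a = coll i j b) = {i, j} := by
  have hca : coll i j a = i := by rcases ha with rfl | rfl <;> simp [coll, hij]
  ext b
  simp only [mem_filter, mem_univ, true_and, hca, mem_insert, mem_singleton]
  by_cases hb : b = j
  · simp [coll, hb]
  · simp [coll, hb, eq_comm]

private lemma fiber_single (i j : Fin n) (a : Fin n) (hai : a ≠ i) (haj : a ≠ j) :
    (univ.filter fun b => coll i j a = coll i j b) = {a} := by
  have hca : coll i j a = a := by simp [coll, haj]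
  ext b
  simp only [mem_filter, mem_univ, true_and, hca, mem_singleton]
  by_cases hb : b = j
  · subst hb
    simp only [coll, if_pos rfl]
    exact ⟨fun h => absurd h hai, fun h => absurd h.symm haj⟩
  · simp [coll, hb, eq_comm]

private lemma parts_eq (i j : Fin n) (hij : i ≠ j) :
    (pairPart i j).parts =
      insert {i, j} (((univ.erase i).erase j).image fun k => ({k} : Finset (Fin n))) := by
  ext B
  rw [mem_pairParts]
  constructor
  · rintro ⟨a, rfl⟩
    by_cases ha : a = i ∨ a = j
    · rw [fiber_pair i j hij a ha]; exact mem_insert_self _ _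
    · push_neg at ha
      rw [fiber_single i j a ha.1 ha.2]
      exact mem_insert_of_mem (mem_image_of_mem _ (by simp [ha.1, ha.2]))
  · intro hB
    rcases mem_insert.1 hB with rfl | hB
    · exact ⟨i, (fiber_pair i j hij i (Or.inl rfl)).symm⟩
    · obtain ⟨k, hk, rfl⟩ := mem_image.1 hB
      simp only [mem_erase] at hk
      exact ⟨k, (fiber_single i j k hk.2.1 hk.1).symm⟩

private lemma filter_card_le (i j : Fin n) (hij : i ≠ j) :
    (((pairPart i j).parts.filter (fun B => 2 ≤ B.card)).card ≤ 1) := by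
  have hsub : ((pairPart i j).parts.filter (fun B => 2 ≤ B.card)) ⊆ {({i, j} : Finset (Fin n))} := by
    intro B hB
    rw [mem_filter] at hB
    rw [parts_eq i j hij, mem_insert] at hB
    rcases hB.1 with rfl | hB1
    · exact mem_singleton_self _
    · obtain ⟨k, _, rfl⟩ := mem_image.1 hB1
      simp at hB
  simpa using card_le_card hsub

private lemma pair_not_mem (i j : Fin n) (hij : i ≠ j) :
    ({i, j} : Finset (Fin n)) ∉ ((univ.erase i).erase j).image fun k => ({k} : Finset (Fin n)) := by
  intro hmem
  obtain ⟨k, _, hk⟩ := mem_image.1 hmem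
  have : ({i, j} : Finset (Fin n)).card = 1 := by rw [← hk]; simp
  rw [card_pair hij] at this
  omega

private lemma qpt_pair {S : Type*} [Fintype S] [DecidableEq S] (π : S → ℝ)
    (i j : Fin n) (hij : i ≠ j) (χ : Fin n → S) :
    qpt π (pairPart i j) χ =
      if χ i = χ j then π (χ j) * ∏ k ∈ (univ.erase i).erase j, π (χ k) else 0 := by
  have hmemij : ({i, j} : Finset (Fin n)) ∈ (pairPart i j).parts := by
    rw [parts_eq i j hij]; exact mem_insert_self _ _
  have hcond : (∀ B ∈ (pairPart i j).parts, ∀ a ∈ B, ∀ b ∈ B, χ a = χ b) ↔ χ i = χ j := by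
    constructor
    · intro H
      exact H _ hmemij i (by simp) j (by simp)
    · intro hχ B hB a ha b hb
      rw [parts_eq i j hij, mem_insert] at hB
      rcases hB with rfl | hB
      · simp only [mem_insert, mem_singleton] at ha hb
        rcases ha with rfl | rfl <;> rcases hb with rfl | rfl <;>
          first | rfl | exact hχ | exact hχ.symm
      · obtain ⟨k, _, rfl⟩ := mem_image.1 hB
        simp only [mem_singleton] at ha hb
        rw [ha, hb]
  unfold qpt
  rw [if_congr hcond rfl rfl]
  by_cases hχ : χ i = χ j
  · rw [if_pos hχ, if_pos hχ]
    set g : Finset (Fin n) → ℝ :=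
      fun B => if h : B.Nonempty then π (χ (B.min' h)) else 1 with hg
    have h1 : ∀ B : {x // x ∈ (pairPart i j).parts},
        π (χ (B.1.min' ((pairPart i j).nonempty_of_mem_parts B.2))) = g B.1 := by
      intro B
      simp only [hg]
      rw [dif_pos ((pairPart i j).nonempty_of_mem_parts B.2)]
    rw [Finset.prod_congr rfl (fun B _ => h1 B), Finset.prod_attach (pairPart i j).parts g,
      parts_eq i j hij, Finset.prod_insert (pair_not_mem i j hij),
      Finset.prod_image (fun a _ b _ h => singleton_injective h)]
    have h2 : g {i, j} = π (χ j) := by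
      simp only [hg]
      have hne : ({i, j} : Finset (Fin n)).Nonempty := ⟨i, by simp⟩
      rw [dif_pos hne]
      have := Finset.min'_mem ({i, j} : Finset (Fin n)) hne
      simp only [mem_insert, mem_singleton] at this
      rcases this with h | h <;> rw [h]
      rw [hχ]
    have h3 : ∀ k ∈ (univ.erase i).erase j, g {k} = π (χ k) := by
      intro k _
      simp only [hg]
      rw [dif_pos (singleton_nonempty k), Finset.min'_singleton]
    rw [h2, Finset.prod_congr rfl h3]
  · rw [if_neg hχ, if_neg hχ]

private lemma qpt_ratio {S : Type*} [Fintype S] [DecidableEq S] (π : S → ℝ)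
    (hpos : ∀ s, 0 < π s) (i j : Fin n) (hij : i ≠ j) (χ : Fin n → S) :
    qpt π (pairPart i j) χ / ∏ k, π (χ k) =
      if χ i = χ j then (π (χ i))⁻¹ else 0 := by
  have hprod : ∏ k, π (χ k) =
      π (χ i) * (π (χ j) * ∏ k ∈ (univ.erase i).erase j, π (χ k)) := by
    rw [← Finset.mul_prod_erase univ _ (mem_univ i),
      ← Finset.mul_prod_erase (univ.erase i) _ (mem_erase.2 ⟨hij.symm, mem_univ j⟩)]
  rw [qpt_pair π i j hij χ, hprod]
  by_cases hχ : χ i = χ j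
  · rw [if_pos hχ, if_pos hχ]
    have hx : π (χ j) * ∏ k ∈ (univ.erase i).erase j, π (χ k) ≠ 0 :=
      (mul_pos (hpos _) (Finset.prod_pos fun k _ => hpos _)).ne'
    rw [mul_comm (π (χ i)) _, div_mul_cancel_left₀ hx]
  · rw [if_neg hχ, if_neg hχ, zero_div]

/-- if `π` is injective and the normalized coordinates of `χ` and
`χ'` agree at every partition with at most one non-singleton block, then `χ` and
`χ'` are equivalent characters. -/
theorem qpt_equal_implies_equiv (n : ℕ) (hn : 1 ≤ n) {S : Type*} [Fintype S]
    [DecidableEq S] (π : S → ℝ) (hpos : ∀ s, 0 < π s) (hsum : ∑ s, π s = 1)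
    (hinj : ∀ s t, π s = π t → s = t)
    (χ χ' : Fin n → S)
    (h : ∀ σ : Finpartition (Finset.univ : Finset (Fin n)),
      ((σ.parts.filter (fun B => 2 ≤ B.card)).card ≤ 1) →
      qpt π σ χ / ∏ i, π (χ i) = qpt π σ χ' / ∏ i, π (χ' i)) :
    (∀ i j, χ i = χ j ↔ χ' i = χ' j) ∧
      ∀ i, (∃ j, j ≠ i ∧ χ j = χ i) → χ' i = χ i := by
  have key : ∀ i j : Fin n, i ≠ j →
      (χ i = χ j ↔ χ' i = χ' j) ∧ (χ i = χ j → χ' i = χ i) := by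
    intro i j hij
    have hr := h (pairPart i j) (filter_card_le i j hij)
    rw [qpt_ratio π hpos i j hij χ, qpt_ratio π hpos i j hij χ'] at hr
    by_cases h1 : χ i = χ j <;> by_cases h2 : χ' i = χ' j
    · rw [if_pos h1, if_pos h2] at hr
      refine ⟨iff_of_true h1 h2, fun _ => ?_⟩
      exact hinj _ _ (inv_injective hr).symm
    · rw [if_pos h1, if_neg h2] at hr
      exact absurd hr (inv_ne_zero (hpos _).ne')
    · rw [if_neg h1, if_pos h2] at hr
      exact absurd hr.symm (inv_ne_zero (hpos _).ne')
    · exact ⟨iff_of_false h1 h2, fun hc => absurd hc h1⟩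
  constructor
  · intro i j
    by_cases hij : i = j
    · subst hij; simp
    · exact (key i j hij).1
  · rintro i ⟨j, hji, hj⟩
    exact (key i j (fun hc => hji hc.symm)).2 hj.symm
end

section
/- Let S be a finite type, π : S → ℝ with π(s) > 0 for all s and ∑ π = 1, and let x, y, z, w ∈ S be pairwise distinct. For a character χ : Fin 4 → S and a set partition σ of Fin 4, write q̃_σ(χ) = q_σ(χ) / (π(χ 0)·π(χ 1)·π(χ 2)·π(χ 3)). Then for every set partition σ of Fin 4 the following two identities hold (writing a character as the 4-tuple of its values): (I) π(y)·q̃_σ(x,x,y,y) + π(z)·q̃_σ(x,x,y,z) − π(y)·q̃_σ(x,x,z,y) − π(z)·q̃_σ(x,x,z,z) = 0; (II) π(x)·q̃_σ(x,x,y,z) + π(w)·q̃_σ(x,w,y,z) − π(w)·q̃_σ(w,w,y,z) − π(x)·q̃_σ(w,x,y,z) = 0. (These are linear model invariants for quartet trees under the equal input model, since the points q_σ over all partitions σ of Fin 4 span the space of phylogenetic mixtures when κ ≥ 4.) -/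
noncomputable def pif {n : ℕ} {S : Type*} (π : S → ℝ) (χ : Fin n → S) (B : Finset (Fin n)) : ℝ :=
  if h : B.Nonempty then π (χ (B.min' h)) else 1

lemma qpt_eq_zero {n : ℕ} {S : Type*} [Fintype S] [DecidableEq S] (π : S → ℝ)
    (σ : Finpartition (Finset.univ : Finset (Fin n))) (χ : Fin n → S)
    (i j : Fin n) (hij : σ.part i = σ.part j) (hne : χ i ≠ χ j) : qpt π σ χ = 0 := by
  rw [qpt, if_neg]
  intro h
  exact hne (h (σ.part i) (σ.part_mem.2 (Finset.mem_univ i)) i (σ.mem_part (Finset.mem_univ i))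
    j (hij ▸ σ.mem_part (Finset.mem_univ j)))

lemma qpt_compat {n : ℕ} {S : Type*} [Fintype S] [DecidableEq S] (π : S → ℝ)
    (σ : Finpartition (Finset.univ : Finset (Fin n))) (χ : Fin n → S)
    (hc : ∀ i j : Fin n, σ.part i = σ.part j → χ i = χ j) :
    qpt π σ χ = ∏ B ∈ σ.parts, pif π χ B := by
  rw [qpt, if_pos]
  · rw [← Finset.prod_attach σ.parts (pif π χ)]
    refine Finset.prod_congr rfl fun B _ => ?_
    rw [pif, dif_pos (σ.nonempty_of_mem_parts B.2)]
  · intro B hB i hi j hj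
    exact hc i j (by rw [σ.part_eq_of_mem hB hi, σ.part_eq_of_mem hB hj])

lemma pif_part {n : ℕ} {S : Type*} [Fintype S] [DecidableEq S] (π : S → ℝ)
    (σ : Finpartition (Finset.univ : Finset (Fin n))) (χ : Fin n → S)
    (hc : ∀ i j : Fin n, σ.part i = σ.part j → χ i = χ j) (i : Fin n) :
    pif π χ (σ.part i) = π (χ i) := by
  have hne : (σ.part i).Nonempty := ⟨i, σ.mem_part (Finset.mem_univ i)⟩
  rw [pif, dif_pos hne]
  congr 1
  exact hc _ i (σ.part_eq_of_mem (σ.part_mem.2 (Finset.mem_univ i)) (Finset.min'_mem _ hne))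

lemma parts_eq_image {n : ℕ} (σ : Finpartition (Finset.univ : Finset (Fin n))) :
    σ.parts = Finset.image σ.part Finset.univ := by
  ext B
  simp only [Finset.mem_image, Finset.mem_univ, true_and]
  constructor
  · intro hB
    obtain ⟨i, hi⟩ := σ.nonempty_of_mem_parts hB
    exact ⟨i, σ.part_eq_of_mem hB hi⟩
  · rintro ⟨i, rfl⟩
    exact σ.part_mem.2 (Finset.mem_univ i)

lemma parts_eq4 (σ : Finpartition (Finset.univ : Finset (Fin 4))) :
    σ.parts = {σ.part 0, σ.part 1, σ.part 2, σ.part 3} := by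
  rw [parts_eq_image]
  have h : (Finset.univ : Finset (Fin 4)) = {0, 1, 2, 3} := by decide
  rw [congrArg (Finset.image σ.part) h]
  simp [Finset.image_insert]

/-- The normalized coordinate `q̃_σ(χ) = q_σ(χ) / (π(χ 0) π(χ 1) π(χ 2) π(χ 3))`. -/
noncomputable def nqpt {S : Type*} [Fintype S] [DecidableEq S] (π : S → ℝ)
    (σ : Finpartition (Finset.univ : Finset (Fin 4))) (χ : Fin 4 → S) : ℝ :=
  qpt π σ χ / (π (χ 0) * π (χ 1) * π (χ 2) * π (χ 3))

set_option maxHeartbeats 2000000 in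
/-- two families of linear model invariants for quartet trees under
the equal input model, expressed by their vanishing at every point `q_σ`. -/
theorem ei_model_invariants_n4 {S : Type*} [Fintype S] [DecidableEq S]
    (π : S → ℝ) (hpos : ∀ s, 0 < π s) (hsum : ∑ s, π s = 1)
    (x y z w : S)
    (hd : x ≠ y ∧ x ≠ z ∧ x ≠ w ∧ y ≠ z ∧ y ≠ w ∧ z ≠ w)
    (σ : Finpartition (Finset.univ : Finset (Fin 4))) :
    (π y * nqpt π σ ![x, x, y, y] + π z * nqpt π σ ![x, x, y, z]
      - π y * nqpt π σ ![x, x, z, y] - π z * nqpt π σ ![x, x, z, z] = 0) ∧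
    (π x * nqpt π σ ![x, x, y, z] + π w * nqpt π σ ![x, w, y, z]
      - π w * nqpt π σ ![w, w, y, z] - π x * nqpt π σ ![w, x, y, z] = 0) := by
  obtain ⟨hxy, hxz, hxw, hyz, hyw, hzw⟩ := hd
  have hπ : ∀ s : S, π s ≠ 0 := fun s => (hpos s).ne'
  have hx0 := hπ x
  have hy0 := hπ y
  have hz0 := hπ z
  have hw0 := hπ w
  have hz : ∀ (i j : Fin 4), σ.part i = σ.part j →
      ∀ χ : Fin 4 → S, χ i ≠ χ j → nqpt π σ χ = 0 := by
    intro i j h χ hne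
    simp [nqpt, qpt_eq_zero π σ χ i j h hne]
  by_cases h02 : σ.part 0 = σ.part 2
  · constructor
    · rw [hz 0 2 h02 _ (by simp [hxy]), hz 0 2 h02 _ (by simp [hxy]),
        hz 0 2 h02 _ (by simp [hxz]), hz 0 2 h02 _ (by simp [hxz])]
      ring
    · rw [hz 0 2 h02 _ (by simp [hxy]), hz 0 2 h02 _ (by simp [hxy]),
        hz 0 2 h02 _ (by simp [Ne.symm hyw]), hz 0 2 h02 _ (by simp [Ne.symm hyw])]
      ring
  by_cases h03 : σ.part 0 = σ.part 3
  · constructor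
    · rw [hz 0 3 h03 _ (by simp [hxy]), hz 0 3 h03 _ (by simp [hxz]),
        hz 0 3 h03 _ (by simp [hxy]), hz 0 3 h03 _ (by simp [hxz])]
      ring
    · rw [hz 0 3 h03 _ (by simp [hxz]), hz 0 3 h03 _ (by simp [hxz]),
        hz 0 3 h03 _ (by simp [Ne.symm hzw]), hz 0 3 h03 _ (by simp [Ne.symm hzw])]
      ring
  by_cases h12 : σ.part 1 = σ.part 2
  · constructor
    · rw [hz 1 2 h12 _ (by simp [hxy]), hz 1 2 h12 _ (by simp [hxy]),
        hz 1 2 h12 _ (by simp [hxz]), hz 1 2 h12 _ (by simp [hxz])]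
      ring
    · rw [hz 1 2 h12 _ (by simp [hxy]), hz 1 2 h12 _ (by simp [Ne.symm hyw]),
        hz 1 2 h12 _ (by simp [Ne.symm hyw]), hz 1 2 h12 _ (by simp [hxy])]
      ring
  by_cases h13 : σ.part 1 = σ.part 3
  · constructor
    · rw [hz 1 3 h13 _ (by simp [hxy]), hz 1 3 h13 _ (by simp [hxz]),
        hz 1 3 h13 _ (by simp [hxy]), hz 1 3 h13 _ (by simp [hxz])]
      ring
    · rw [hz 1 3 h13 _ (by simp [hxz]), hz 1 3 h13 _ (by simp [Ne.symm hzw]),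
        hz 1 3 h13 _ (by simp [Ne.symm hzw]), hz 1 3 h13 _ (by simp [hxz])]
      ring
  have h20 : ¬ σ.part 2 = σ.part 0 := fun h => h02 h.symm
  have h30 : ¬ σ.part 3 = σ.part 0 := fun h => h03 h.symm
  have h21 : ¬ σ.part 2 = σ.part 1 := fun h => h12 h.symm
  have h31 : ¬ σ.part 3 = σ.part 1 := fun h => h13 h.symm
  by_cases h01 : σ.part 0 = σ.part 1
  · by_cases h23 : σ.part 2 = σ.part 3
    · -- parts = {p0, p2}
      have hP : σ.parts = {σ.part 0, σ.part 2} := by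
        rw [parts_eq4 σ]
        ext B
        simp only [Finset.mem_insert, Finset.mem_singleton, ← h01, ← h23]
        tauto
      have cgen : ∀ χ : Fin 4 → S, χ 0 = χ 1 → χ 2 = χ 3 →
          ∀ i j : Fin 4, σ.part i = σ.part j → χ i = χ j := by
        intro χ hv1 hv2 i j hij
        fin_cases i <;> fin_cases j <;> simp_all
      have ev : ∀ χ : Fin 4 → S, χ 0 = χ 1 → χ 2 = χ 3 →
          nqpt π σ χ = 1 / (π (χ 0) * π (χ 2)) := by
        intro χ hv1 hv2
        have c := cgen χ hv1 hv2
        rw [nqpt, qpt_compat π σ χ c, hP, Finset.prod_pair h02,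
          pif_part π σ χ c 0, pif_part π σ χ c 2,
          show χ 1 = χ 0 from hv1.symm, show χ 3 = χ 2 from hv2.symm]
        field_simp [hπ (χ 0), hπ (χ 2)]
      constructor
      · rw [ev ![x, x, y, y] rfl rfl, ev ![x, x, z, z] rfl rfl,
          hz 2 3 h23 _ (by simp [hyz]), hz 2 3 h23 _ (by simp [Ne.symm hyz])]
        simp only [Matrix.cons_val_zero, Matrix.cons_val_two, Matrix.tail_cons,
          Matrix.head_cons]
        field_simp
        ring
      · rw [hz 2 3 h23 _ (by simp [hyz]), hz 2 3 h23 _ (by simp [hyz]),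
          hz 2 3 h23 _ (by simp [hyz]), hz 2 3 h23 _ (by simp [hyz])]
        ring
    · -- parts = {p0, p2, p3}
      have h32 : ¬ σ.part 3 = σ.part 2 := fun h => h23 h.symm
      have hP : σ.parts = {σ.part 0, σ.part 2, σ.part 3} := by
        rw [parts_eq4 σ]
        ext B
        simp only [Finset.mem_insert, Finset.mem_singleton, ← h01]
        tauto
      have cgen : ∀ χ : Fin 4 → S, χ 0 = χ 1 →
          ∀ i j : Fin 4, σ.part i = σ.part j → χ i = χ j := by
        intro χ hv1 i j hij
        fin_cases i <;> fin_cases j <;> simp_all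
      have ev : ∀ χ : Fin 4 → S, χ 0 = χ 1 → nqpt π σ χ = 1 / π (χ 0) := by
        intro χ hv1
        have c := cgen χ hv1
        rw [nqpt, qpt_compat π σ χ c, hP,
          Finset.prod_insert (by simp [h02, h03]), Finset.prod_pair h23,
          pif_part π σ χ c 0, pif_part π σ χ c 2, pif_part π σ χ c 3,
          show χ 1 = χ 0 from hv1.symm]
        field_simp [hπ (χ 0), hπ (χ 2), hπ (χ 3)]
      constructor
      · rw [ev ![x, x, y, y] rfl, ev ![x, x, y, z] rfl, ev ![x, x, z, y] rfl,
          ev ![x, x, z, z] rfl]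
        simp only [Matrix.cons_val_zero]
        ring
      · rw [ev ![x, x, y, z] rfl, ev ![w, w, y, z] rfl,
          hz 0 1 h01 _ (by simp [hxw]), hz 0 1 h01 _ (by simp [Ne.symm hxw])]
        simp only [Matrix.cons_val_zero]
        field_simp
        ring
  · have h10 : ¬ σ.part 1 = σ.part 0 := fun h => h01 h.symm
    by_cases h23 : σ.part 2 = σ.part 3
    · -- parts = {p0, p1, p2}
      have hP : σ.parts = {σ.part 0, σ.part 1, σ.part 2} := by
        rw [parts_eq4 σ]
        ext B
        simp only [Finset.mem_insert, Finset.mem_singleton, ← h23]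
        tauto
      have cgen : ∀ χ : Fin 4 → S, χ 2 = χ 3 →
          ∀ i j : Fin 4, σ.part i = σ.part j → χ i = χ j := by
        intro χ hv1 i j hij
        fin_cases i <;> fin_cases j <;> simp_all
      have ev : ∀ χ : Fin 4 → S, χ 2 = χ 3 → nqpt π σ χ = 1 / π (χ 2) := by
        intro χ hv1
        have c := cgen χ hv1
        rw [nqpt, qpt_compat π σ χ c, hP,
          Finset.prod_insert (by simp [h01, h02]), Finset.prod_pair h12,
          pif_part π σ χ c 0, pif_part π σ χ c 1, pif_part π σ χ c 2,
          show χ 3 = χ 2 from hv1.symm]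
        field_simp [hπ (χ 0), hπ (χ 1), hπ (χ 2)]
      constructor
      · rw [ev ![x, x, y, y] rfl, ev ![x, x, z, z] rfl,
          hz 2 3 h23 _ (by simp [hyz]), hz 2 3 h23 _ (by simp [Ne.symm hyz])]
        simp only [Matrix.cons_val_two, Matrix.tail_cons, Matrix.head_cons]
        field_simp
        ring
      · rw [hz 2 3 h23 _ (by simp [hyz]), hz 2 3 h23 _ (by simp [hyz]),
          hz 2 3 h23 _ (by simp [hyz]), hz 2 3 h23 _ (by simp [hyz])]
        ring
    · -- parts = {p0, p1, p2, p3}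
      have h32 : ¬ σ.part 3 = σ.part 2 := fun h => h23 h.symm
      have hP := parts_eq4 σ
      have cgen : ∀ χ : Fin 4 → S,
          ∀ i j : Fin 4, σ.part i = σ.part j → χ i = χ j := by
        intro χ i j hij
        fin_cases i <;> fin_cases j <;> simp_all
      have ev : ∀ χ : Fin 4 → S, nqpt π σ χ = 1 := by
        intro χ
        have c := cgen χ
        rw [nqpt, qpt_compat π σ χ c, hP,
          Finset.prod_insert (by simp [h01, h02, h03]),
          Finset.prod_insert (by simp [h12, h13]), Finset.prod_pair h23,
          pif_part π σ χ c 0, pif_part π σ χ c 1, pif_part π σ χ c 2,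
          pif_part π σ χ c 3]
        field_simp [hπ (χ 0), hπ (χ 1), hπ (χ 2), hπ (χ 3)]
      constructor
      · rw [ev, ev, ev, ev]; ring
      · rw [ev, ev, ev, ev]; ring
end
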